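/- In a residuated lattice, for elements x, y: x^⊥ = y^⊥ if and only if the set of minimal prime filters containing x equals the set of minimal prime filters containing y. -/
import Mathlib


/-- A (bounded, integral, commutative) residuated lattice. -/
class ResLattice (A : Type*) extends Lattice A, CommMonoid A, OrderBot A where
  himp : A → A → A
  adjunction : ∀ x y z : A, x * y ≤ z ↔ x ≤ himp y z
  le_one : ∀ x : A, x ≤ 1

variable {A : Type*} [ResLattice A]

/-- Coannihilator of a subset: `X^⊥ = {a | a ⊔ x = 1 for all x ∈ X}`. -/
def Coann (X : Set A) : Set A := {a | ∀ x ∈ X, a ⊔ x = 1}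

/-- Coannulet of an element: `x^⊥`. -/
def rperp (x : A) : Set A := Coann {x}

/-- The principal filter generated by `x`. -/
def PFil (x : A) : Set A := {a | ∃ n : ℕ, 0 < n ∧ x ^ n ≤ a}

/-- Filters of a residuated lattice. -/
def IsRLFilter (F : Set A) : Prop :=
  F.Nonempty ∧ (∀ x ∈ F, ∀ y ∈ F, x * y ∈ F) ∧ (∀ x ∈ F, ∀ y : A, x ⊔ y ∈ F)

/-- Prime filters. -/
def IsRLPrime (P : Set A) : Prop :=
  IsRLFilter P ∧ P ≠ Set.univ ∧ ∀ x y : A, x ⊔ y ∈ P → x ∈ P ∨ y ∈ P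

/-- Minimal prime filters. -/
def IsRLMinPrime (P : Set A) : Prop :=
  IsRLPrime P ∧ ∀ Q : Set A, IsRLPrime Q → Q ⊆ P → Q = P

/-- Quasicomplemented residuated lattice. -/
def Quasicomplemented (A : Type*) [ResLattice A] : Prop :=
  ∀ x : A, ∃ y : A, Coann (rperp x) = rperp y

/-- α-filters. -/
def IsAlphaFilter (F : Set A) : Prop :=
  IsRLFilter F ∧ ∀ x ∈ F, Coann (rperp x) ⊆ F

/-- The α-filter generated by a subset. -/
def alphaGen (X : Set A) : Set A := ⋂₀ {G : Set A | IsAlphaFilter G ∧ X ⊆ G}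

/-! ### Basic lemmas about residuated lattices -/

lemma RL.mem_rperp {a x : A} : a ∈ rperp x ↔ a ⊔ x = 1 := by
  simp [rperp, Coann]

lemma RL.mul_le_mul {a b c d : A} (h1 : a ≤ b) (h2 : c ≤ d) : a * c ≤ b * d := by
  have step : ∀ u v w : A, u ≤ v → u * w ≤ v * w := by
    intro u v w huv
    have hv : v ≤ ResLattice.himp w (v * w) :=
      (ResLattice.adjunction v w (v * w)).mp le_rfl
    exact (ResLattice.adjunction u w (v * w)).mpr (le_trans huv hv)
  calc a * c ≤ b * c := step a b c h1
    _ = c * b := mul_comm _ _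
    _ ≤ d * b := step c d b h2
    _ = b * d := mul_comm _ _

lemma RL.mul_le_left (a b : A) : a * b ≤ a := by
  have := RL.mul_le_mul (le_refl a) (ResLattice.le_one b)
  simpa using this

lemma RL.mul_le_right (a b : A) : a * b ≤ b := by
  rw [mul_comm]; exact RL.mul_le_left b a

lemma RL.mul_sup (a b c : A) : a * (b ⊔ c) = a * b ⊔ a * c := by
  apply le_antisymm
  · have h : b ⊔ c ≤ ResLattice.himp a (a * b ⊔ a * c) := by
      apply sup_le
      · exact (ResLattice.adjunction b a _).mp
          (le_trans (le_of_eq (mul_comm b a)) le_sup_left)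
      · exact (ResLattice.adjunction c a _).mp
          (le_trans (le_of_eq (mul_comm c a)) le_sup_right)
    have h2 := (ResLattice.adjunction (b ⊔ c) a _).mpr h
    calc a * (b ⊔ c) = (b ⊔ c) * a := mul_comm _ _
      _ ≤ a * b ⊔ a * c := h2
  · exact sup_le (RL.mul_le_mul le_rfl le_sup_left) (RL.mul_le_mul le_rfl le_sup_right)

lemma RL.pow_le_pow {a b : A} (h : a ≤ b) (n : ℕ) : a ^ n ≤ b ^ n := by
  induction n with
  | zero => simp
  | succ n ih =>
    rw [pow_succ, pow_succ]
    exact RL.mul_le_mul ih h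

/-- `(a ⊔ b)^m ≤ a ⊔ b^m`. -/
lemma RL.sup_pow_le (a b : A) (m : ℕ) : (a ⊔ b) ^ m ≤ a ⊔ b ^ m := by
  induction m with
  | zero =>
    simp only [pow_zero]
    exact le_sup_right
  | succ m ih =>
    rw [pow_succ]
    calc (a ⊔ b) ^ m * (a ⊔ b) ≤ (a ⊔ b ^ m) * (a ⊔ b) := RL.mul_le_mul ih le_rfl
      _ = ((a ⊔ b ^ m) * a) ⊔ ((a ⊔ b ^ m) * b) := RL.mul_sup _ _ _
      _ ≤ a ⊔ b ^ (m + 1) := by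
          apply sup_le
          · exact le_trans (RL.mul_le_right _ a) le_sup_left
          · rw [mul_comm, RL.mul_sup]
            apply sup_le
            · exact le_trans (RL.mul_le_right b a) le_sup_left
            · rw [mul_comm b (b ^ m), ← pow_succ]
              exact le_sup_right

/-- `(a ⊔ b)^(n*m) ≤ a^n ⊔ b^m`. -/
lemma RL.sup_pow_mul_le (a b : A) (n m : ℕ) : (a ⊔ b) ^ (n * m) ≤ a ^ n ⊔ b ^ m := by
  rw [pow_mul]
  calc ((a ⊔ b) ^ n) ^ m ≤ (a ^ n ⊔ b) ^ m := by
        apply RL.pow_le_pow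
        rw [sup_comm a b, sup_comm (a ^ n) b]
        exact RL.sup_pow_le b a n
    _ ≤ a ^ n ⊔ b ^ m := RL.sup_pow_le _ _ _

/-! ### Filter lemmas -/

lemma RL.filter_mem_of_le {F : Set A} (hF : IsRLFilter F) {a c : A}
    (ha : a ∈ F) (hac : a ≤ c) : c ∈ F := by
  have : a ⊔ c ∈ F := hF.2.2 a ha c
  rwa [sup_eq_right.mpr hac] at this

lemma RL.one_mem_filter {F : Set A} (hF : IsRLFilter F) : (1 : A) ∈ F := by
  obtain ⟨a, ha⟩ := hF.1
  exact RL.filter_mem_of_le hF ha (ResLattice.le_one a)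

lemma RL.pow_mem_filter {F : Set A} (hF : IsRLFilter F) {a : A} (ha : a ∈ F) (n : ℕ) :
    a ^ n ∈ F := by
  induction n with
  | zero => rw [pow_zero]; exact RL.one_mem_filter hF
  | succ n ih =>
    rw [pow_succ]
    exact hF.2.1 _ ih _ ha

lemma RL.bot_not_mem_prime {P : Set A} (hP : IsRLPrime P) : (⊥ : A) ∉ P := by
  intro hb
  apply hP.2.1
  ext c
  simp only [Set.mem_univ, iff_true]
  exact RL.filter_mem_of_le hP.1 hb bot_le

/-- The filter generated by a filter `F` and an element `a`. -/
def RLgen (F : Set A) (a : A) : Set A := {c | ∃ f ∈ F, ∃ n : ℕ, f * a ^ n ≤ c}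

lemma RL.subset_gen {F : Set A} (a : A) : F ⊆ RLgen F a := by
  intro f hf
  exact ⟨f, hf, 0, by simpa using le_rfl⟩

lemma RL.mem_gen {F : Set A} (hF : IsRLFilter F) (a : A) : a ∈ RLgen F a := by
  obtain ⟨f, hf⟩ := hF.1
  exact ⟨f, hf, 1, by simpa using RL.mul_le_right f a⟩

lemma RL.gen_filter {F : Set A} (hF : IsRLFilter F) (a : A) : IsRLFilter (RLgen F a) := by
  refine ⟨⟨a, RL.mem_gen hF a⟩, ?_, ?_⟩
  · rintro c1 ⟨f1, hf1, n1, h1⟩ c2 ⟨f2, hf2, n2, h2⟩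
    refine ⟨f1 * f2, hF.2.1 _ hf1 _ hf2, n1 + n2, ?_⟩
    have : f1 * f2 * a ^ (n1 + n2) = (f1 * a ^ n1) * (f2 * a ^ n2) := by
      rw [pow_add, mul_mul_mul_comm]
    rw [this]
    exact RL.mul_le_mul h1 h2
  · rintro c ⟨f, hf, n, h⟩ y
    exact ⟨f, hf, n, le_trans h le_sup_left⟩

/-! ### Existence of prime filters -/

/-- Zorn: there is a prime filter containing `F0` and disjoint from the ⊔-closed set `S`. -/
lemma RL.exists_prime_disjoint (S F0 : Set A)
    (hS : ∀ a ∈ S, ∀ b ∈ S, a ⊔ b ∈ S) (hSne : S.Nonempty)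
    (hF0 : IsRLFilter F0) (hd : ∀ c ∈ F0, c ∉ S) :
    ∃ P : Set A, IsRLPrime P ∧ F0 ⊆ P ∧ ∀ c ∈ P, c ∉ S := by
  set T : Set (Set A) := {F | IsRLFilter F ∧ F0 ⊆ F ∧ ∀ c ∈ F, c ∉ S} with hT
  have hF0T : F0 ∈ T := ⟨hF0, subset_rfl, hd⟩
  obtain ⟨M, hF0M, hM⟩ := zorn_subset_nonempty T (by
    intro c hcT hchain hcne
    refine ⟨⋃₀ c, ⟨⟨?_, ?_, ?_⟩, ?_, ?_⟩, fun s hs => Set.subset_sUnion_of_mem hs⟩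
    · obtain ⟨F, hF⟩ := hcne
      obtain ⟨f, hf⟩ := (hcT hF).1.1
      exact ⟨f, F, hF, hf⟩
    · rintro u ⟨F1, hF1, hu⟩ v ⟨F2, hF2, hv⟩
      rcases hchain.total hF1 hF2 with h | h
      · exact ⟨F2, hF2, (hcT hF2).1.2.1 u (h hu) v hv⟩
      · exact ⟨F1, hF1, (hcT hF1).1.2.1 u hu v (h hv)⟩
    · rintro u ⟨F1, hF1, hu⟩ v
      exact ⟨F1, hF1, (hcT hF1).1.2.2 u hu v⟩
    · obtain ⟨F, hF⟩ := hcne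
      exact subset_trans (hcT hF).2.1 (Set.subset_sUnion_of_mem hF)
    · rintro u ⟨F1, hF1, hu⟩
      exact (hcT hF1).2.2 u hu) F0 hF0T
  have hMfil : IsRLFilter M := hM.1.1
  have hMd : ∀ c ∈ M, c ∉ S := hM.1.2.2
  refine ⟨M, ⟨hMfil, ?_, ?_⟩, subset_trans hF0M subset_rfl, hMd⟩
  · intro huniv
    obtain ⟨s, hs⟩ := hSne
    exact hMd s (huniv ▸ Set.mem_univ s) hs
  · intro a b hab
    by_contra hcon
    push_neg at hcon
    obtain ⟨haM, hbM⟩ := hcon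
    -- the generated filters are not disjoint from S
    have hmeet : ∀ u : A, u ∉ M → ∃ d ∈ S, ∃ f ∈ M, ∃ n : ℕ, f * u ^ n ≤ d := by
      intro u huM
      by_contra hno
      push_neg at hno
      have hgen : RLgen M u ∈ T := by
        refine ⟨RL.gen_filter hMfil u, subset_trans hM.1.2.1 (RL.subset_gen u), ?_⟩
        rintro d ⟨f, hf, n, hfd⟩ hdS
        exact hno d hdS f hf n hfd
      have := hM.2 hgen (RL.subset_gen u)
      exact huM (this (RL.mem_gen hMfil u))
    obtain ⟨d1, hd1S, f1, hf1, n1, h1⟩ := hmeet a haM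
    obtain ⟨d2, hd2S, f2, hf2, n2, h2⟩ := hmeet b hbM
    have hw : f1 * f2 * (a ⊔ b) ^ (n1 * n2) ∈ M :=
      hMfil.2.1 _ (hMfil.2.1 _ hf1 _ hf2) _ (RL.pow_mem_filter hMfil hab _)
    have hle : f1 * f2 * (a ⊔ b) ^ (n1 * n2) ≤ d1 ⊔ d2 := by
      calc f1 * f2 * (a ⊔ b) ^ (n1 * n2)
          ≤ f1 * f2 * (a ^ n1 ⊔ b ^ n2) :=
            RL.mul_le_mul le_rfl (RL.sup_pow_mul_le a b n1 n2)
        _ = (f1 * f2) * a ^ n1 ⊔ (f1 * f2) * b ^ n2 := RL.mul_sup _ _ _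
        _ ≤ f1 * a ^ n1 ⊔ f2 * b ^ n2 := by
            apply sup_le_sup
            · exact RL.mul_le_mul (RL.mul_le_left f1 f2) le_rfl
            · exact RL.mul_le_mul (RL.mul_le_right f1 f2) le_rfl
        _ ≤ d1 ⊔ d2 := sup_le_sup h1 h2
    have : d1 ⊔ d2 ∈ M := RL.filter_mem_of_le hMfil hw hle
    exact hMd _ this (hS d1 hd1S d2 hd2S)

/-- Every prime filter contains a minimal prime filter. -/
lemma RL.exists_minprime_subset {P : Set A} (hP : IsRLPrime P) :
    ∃ m : Set A, IsRLMinPrime m ∧ m ⊆ P := by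
  set T : Set (Set A) := {Q | IsRLPrime Q ∧ Q ⊆ P} with hT
  obtain ⟨m, hmP, hm⟩ := zorn_superset_nonempty T (by
    intro c hcT hchain hcne
    obtain ⟨Q0, hQ0⟩ := hcne
    refine ⟨⋂₀ c, ⟨⟨⟨?_, ?_, ?_⟩, ?_, ?_⟩, ?_⟩, fun s hs => Set.sInter_subset_of_mem hs⟩
    · exact ⟨1, fun Q hQ => RL.one_mem_filter (hcT hQ).1.1⟩
    · intro u hu v hv
      exact fun Q hQ => (hcT hQ).1.1.2.1 u (hu Q hQ) v (hv Q hQ)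
    · intro u hu v
      exact fun Q hQ => (hcT hQ).1.1.2.2 u (hu Q hQ) v
    · intro huniv
      apply (hcT hQ0).1.2.1
      ext z
      simp only [Set.mem_univ, iff_true]
      exact (huniv ▸ Set.mem_univ z : z ∈ ⋂₀ c) Q0 hQ0
    · intro u v huv
      by_contra hcon
      push_neg at hcon
      obtain ⟨hu, hv⟩ := hcon
      simp only [Set.mem_sInter] at hu hv
      push_neg at hu hv
      obtain ⟨Q1, hQ1, hu1⟩ := hu
      obtain ⟨Q2, hQ2, hv2⟩ := hv
      rcases hchain.total hQ1 hQ2 with h | h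
      · rcases (hcT hQ1).1.2.2 u v (huv Q1 hQ1) with h' | h'
        · exact hu1 h'
        · exact hv2 (h h')
      · rcases (hcT hQ2).1.2.2 u v (huv Q2 hQ2) with h' | h'
        · exact hu1 (h h')
        · exact hv2 h'
    · exact subset_trans (Set.sInter_subset_of_mem hQ0) (hcT hQ0).2) P ⟨hP, subset_rfl⟩
  refine ⟨m, ⟨hm.1.1, ?_⟩, hm.1.2⟩
  intro Q hQ hQm
  have hQT : Q ∈ T := ⟨hQ, subset_trans hQm hm.1.2⟩
  exact le_antisymm hQm (hm.2 hQT hQm)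

/-- The trivial filter `{c | 1 ≤ c}`. -/
lemma RL.one_filter : IsRLFilter {c : A | (1 : A) ≤ c} :=
  ⟨⟨1, le_rfl⟩, fun u hu v hv => by simpa using RL.mul_le_mul hu hv,
   fun u hu v => le_trans hu le_sup_left⟩

/-- For `z ≠ 1` there is a minimal prime filter not containing `z`. -/
lemma RL.exists_minprime_not_mem {z : A} (hz : z ≠ 1) :
    ∃ m : Set A, IsRLMinPrime m ∧ z ∉ m := by
  obtain ⟨P, hP, _, hPd⟩ := RL.exists_prime_disjoint {z} {c : A | (1 : A) ≤ c}
    (by intro a ha b hb; simp only [Set.mem_singleton_iff] at *; rw [ha, hb, sup_idem])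
    ⟨z, rfl⟩ RL.one_filter
    (by
      intro c hc hcS
      simp only [Set.mem_singleton_iff] at hcS
      exact hz (le_antisymm (ResLattice.le_one z) (hcS ▸ hc)))
  obtain ⟨m, hm, hmP⟩ := RL.exists_minprime_subset hP
  exact ⟨m, hm, fun hzm => hPd z (hmP hzm) rfl⟩

/-- A minimal prime filter containing `x` must miss some element of `x^⊥`. -/
lemma RL.minprime_perp {m : Set A} (hm : IsRLMinPrime m) {x : A} (hx : x ∈ m) :
    ∃ b : A, b ∉ m ∧ b ⊔ x = 1 := by
  by_contra hcon
  push_neg at hcon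
  have hperp : ∀ b : A, b ⊔ x = 1 → b ∈ m := by
    intro b hb
    by_contra hbm
    exact hcon b hbm hb
  have hbot : (⊥ : A) ∉ m := RL.bot_not_mem_prime hm.1
  set S : Set A := {s | ∃ b : A, b ∉ m ∧ s = x ⊔ b} with hSdef
  obtain ⟨P, hP, _, hPd⟩ := RL.exists_prime_disjoint S {c : A | (1 : A) ≤ c}
    (by
      rintro s1 ⟨b1, hb1, rfl⟩ s2 ⟨b2, hb2, rfl⟩
      refine ⟨b1 ⊔ b2, ?_, by rw [sup_sup_sup_comm, sup_idem]⟩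
      intro hmem
      rcases hm.1.2.2 b1 b2 hmem with h | h
      · exact hb1 h
      · exact hb2 h)
    ⟨x ⊔ ⊥, ⊥, hbot, rfl⟩ RL.one_filter
    (by
      rintro c hc ⟨b, hbm, rfl⟩
      have h1 : x ⊔ b = 1 := le_antisymm (ResLattice.le_one _) hc
      exact hbm (hperp b (by rwa [sup_comm b x])))
  -- x ∉ P
  have hxP : x ∉ P := by
    intro hxP
    exact hPd x hxP ⟨⊥, hbot, (sup_bot_eq x).symm⟩
  -- P ⊆ m
  have hPm : P ⊆ m := by
    intro p hp
    by_contra hpm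
    have : x ⊔ p ∈ P := by
      have := hP.1.2.2 p hp x
      rwa [sup_comm p x] at this
    exact hPd _ this ⟨p, hpm, rfl⟩
  have := hm.2 P hP hPm
  exact hxP (this ▸ hx)

/-- Key: if `x^⊥ = y^⊥` then every minimal prime containing `x` contains `y`. -/
lemma RL.key_forward {x y : A} (h : rperp x = rperp y)
    {m : Set A} (hm : IsRLMinPrime m) (hx : x ∈ m) : y ∈ m := by
  obtain ⟨b, hbm, hbx⟩ := RL.minprime_perp hm hx
  have hby : b ⊔ y = 1 := RL.mem_rperp.mp (h ▸ RL.mem_rperp.mpr hbx)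
  have h1 : (1 : A) ∈ m := RL.one_mem_filter hm.1.1
  rcases hm.1.2.2 b y (hby ▸ h1) with h' | h'
  · exact absurd h' hbm
  · exact h'

/-- Key: if the minimal primes containing `x` and `y` coincide, then `x^⊥ ⊆ y^⊥`. -/
lemma RL.key_backward {x y : A}
    (h : {m : Set A | IsRLMinPrime m ∧ x ∈ m} = {m : Set A | IsRLMinPrime m ∧ y ∈ m}) :
    rperp x ⊆ rperp y := by
  intro a ha
  have hax : a ⊔ x = 1 := RL.mem_rperp.mp ha
  rw [RL.mem_rperp]
  by_contra hne
  obtain ⟨m, hm, hay⟩ := RL.exists_minprime_not_mem hne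
  have hym : y ∉ m := fun hy =>
    hay (RL.filter_mem_of_le hm.1.1 hy le_sup_right)
  have ham : a ∉ m := fun haM =>
    hay (RL.filter_mem_of_le hm.1.1 haM le_sup_left)
  have hxm : x ∉ m := by
    intro hxm
    have : m ∈ {m : Set A | IsRLMinPrime m ∧ x ∈ m} := ⟨hm, hxm⟩
    rw [h] at this
    exact hym this.2
  have h1 : (1 : A) ∈ m := RL.one_mem_filter hm.1.1
  rcases hm.1.2.2 a x (hax ▸ h1) with h' | h'
  · exact ham h'
  · exact hxm h'

theorem stmt6 (x y : A) :
    rperp x = rperp y ↔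
      {m : Set A | IsRLMinPrime m ∧ x ∈ m} = {m : Set A | IsRLMinPrime m ∧ y ∈ m} := by
  constructor
  · intro h
    ext m
    simp only [Set.mem_setOf_eq]
    exact ⟨fun ⟨hm, hx⟩ => ⟨hm, RL.key_forward h hm hx⟩,
           fun ⟨hm, hy⟩ => ⟨hm, RL.key_forward h.symm hm hy⟩⟩
  · intro h
    exact Set.Subset.antisymm (RL.key_backward h) (RL.key_backward h.symm)
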